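/- For α ∈ (0,1), define ψ₀(x) = x/(1+x)^(1−α) and ψ₁(x) = 1/(1+x)^(1−α) on [0,1], and h(x) = 1/x on (0,1]. Then |ψ₀'(x)|·h(ψ₀(x)) + |ψ₁'(x)|·h(ψ₁(x)) = h(x) for all x ∈ (0,1]. -/

import Mathlib

open Set

theorem stmt_2 (a : ℝ) (ha : a ∈ Ioo (0:ℝ) 1) (x : ℝ) (hx : x ∈ Ioc (0:ℝ) 1) :
    |deriv (fun y : ℝ => y / (1 + y) ^ (1 - a)) x| * (1 / (x / (1 + x) ^ (1 - a)))
      + |deriv (fun y : ℝ => 1 / (1 + y) ^ (1 - a)) x| * (1 / (1 / (1 + x) ^ (1 - a)))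
      = 1 / x := by
  obtain ⟨ha0, ha1⟩ := ha
  obtain ⟨hx0, hx1⟩ := hx
  have h1x : (0:ℝ) < 1 + x := by linarith
  have hp : (0:ℝ) < (1 + x) ^ (1 - a) := Real.rpow_pos_of_pos h1x _
  -- derivative of inner function
  have hg : HasDerivAt (fun y : ℝ => (1 + y) ^ (1 - a))
      ((1 - a) * (1 + x) ^ (1 - a - 1)) x := by
    have h := (Real.hasDerivAt_rpow_const (p := 1 - a) (Or.inl h1x.ne')).comp x
      ((hasDerivAt_id x).const_add 1)
    simpa [Function.comp_def] using h
  have hsub : (1 + x) ^ (1 - a - 1) = (1 + x) ^ (1 - a) / (1 + x) := by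
    rw [Real.rpow_sub h1x, Real.rpow_one]
  have hd0 : deriv (fun y : ℝ => y / (1 + y) ^ (1 - a)) x
      = (1 + a * x) / ((1 + x) * (1 + x) ^ (1 - a)) := by
    have h := ((hasDerivAt_id x).div hg hp.ne').deriv
    simp only [id] at h
    rw [show (fun y : ℝ => y / (1 + y) ^ (1 - a)) = (id / fun y => (1 + y) ^ (1 - a)) from rfl, h, hsub]
    field_simp
    ring
  have hd1 : deriv (fun y : ℝ => 1 / (1 + y) ^ (1 - a)) x
      = -((1 - a) / ((1 + x) * (1 + x) ^ (1 - a))) := by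
    have h := ((hasDerivAt_const x (1:ℝ)).div hg hp.ne').deriv
    rw [show (fun y : ℝ => 1 / (1 + y) ^ (1 - a)) = ((fun _ => (1:ℝ)) / fun y => (1 + y) ^ (1 - a)) from rfl, h, hsub]
    field_simp
    ring
  rw [hd0, hd1]
  rw [abs_of_pos (by positivity), abs_neg, abs_of_pos (div_pos (by linarith) (by positivity))]
  field_simp
  ring
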